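/- The relation ∼ on regular edge sets of a finite directed acyclic graph with source s, defined by A ∼ A' iff A and A' have a common minimum cut separating each of them from s, is an equivalence relation; in particular it is transitive. -/

import Mathlib

open Finset

/-- Consecutive edges in the list match head-to-tail. -/
def EChain {V E : Type*} (tl hd : E → V) (p : List E) : Prop :=
  p.Chain' (fun d e => hd d = tl e)

/-- A (nonempty) directed path of edges starting at node `s`. -/
def PathFrom {V E : Type*} (tl hd : E → V) (s : V) (p : List E) : Prop :=
  p ≠ [] ∧ EChain tl hd p ∧ ∀ e ∈ p.head?, tl e = s

/-- The directed graph is acyclic: no nonempty edge-chain returns to its start. -/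
def Acyclic {V E : Type*} (tl hd : E → V) : Prop :=
  ∀ p : List E, p ≠ [] → EChain tl hd p →
    ∀ d ∈ p.head?, ∀ e ∈ p.getLast?, hd e ≠ tl d

/-- `B` separates the edge set `A` from `s`: every directed path from `s`
ending with an edge of `A` passes through an edge of `B` (i.e. `B` is a cut
between `s` and `A`). -/
def Separates {V E : Type*} (tl hd : E → V) (s : V) (A B : Finset E) : Prop :=
  ∀ p : List E, PathFrom tl hd s p → (∃ e ∈ p.getLast?, e ∈ A) → ∃ b ∈ B, b ∈ p

/-- The minimum cut capacity between `s` and the edge set `A`. -/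
noncomputable def mincut {V E : Type*} [Fintype E] (tl hd : E → V) (s : V)
    (A : Finset E) : ℕ :=
  sInf {n | ∃ B : Finset E, Separates tl hd s A B ∧ B.card = n}

/-- `B` is a minimum cut between `s` and the edge set `A`. -/
def IsMinCut {V E : Type*} [Fintype E] (tl hd : E → V) (s : V) (A B : Finset E) : Prop :=
  Separates tl hd s A B ∧ B.card = mincut tl hd s A

/-- An edge set is regular if its cardinality equals its minimum cut capacity from `s`. -/
def Regular {V E : Type*} [Fintype E] (tl hd : E → V) (s : V) (A : Finset E) : Prop :=
  A.card = mincut tl hd s A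

/-- `A ∼ A'`: the two edge sets have a common minimum cut from `s`. -/
def EquivSets {V E : Type*} [Fintype E] (tl hd : E → V) (s : V) (A A' : Finset E) : Prop :=
  ∃ C : Finset E, IsMinCut tl hd s A C ∧ IsMinCut tl hd s A' C

/-- `A₁ ≺ A₂`: `|A₁| < |A₂|` and some minimum cut between `s` and `A₂`
also separates `A₁` from `s`. -/
def Dominates {V E : Type*} [Fintype E] (tl hd : E → V) (s : V) (A₁ A₂ : Finset E) : Prop :=
  A₁.card < A₂.card ∧
    ∃ C : Finset E, IsMinCut tl hd s A₂ C ∧ Separates tl hd s A₁ C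

/-- A directed path of edges from node `s` to node `t`. -/
def NPathFromTo {V E : Type*} (tl hd : E → V) (s t : V) (p : List E) : Prop :=
  PathFrom tl hd s p ∧ ∀ e ∈ p.getLast?, hd e = t

/-- `B` is a cut between the nodes `s` and `t`. -/
def NSeparates {V E : Type*} (tl hd : E → V) (s t : V) (B : Finset E) : Prop :=
  ∀ p : List E, NPathFromTo tl hd s t p → ∃ b ∈ B, b ∈ p

/-- The minimum cut capacity between the nodes `s` and `t`. -/
noncomputable def nmincut {V E : Type*} [Fintype E] (tl hd : E → V) (s t : V) : ℕ :=
  sInf {n | ∃ B : Finset E, NSeparates tl hd s t B ∧ B.card = n}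

/-- `B` is a minimum cut between the nodes `s` and `t`. -/
def IsNodeMinCut {V E : Type*} [Fintype E] (tl hd : E → V) (s t : V) (B : Finset E) : Prop :=
  NSeparates tl hd s t B ∧ B.card = nmincut tl hd s t

/-- `d ≤ e` for edges: there is a directed path starting with `d` and ending with `e`
(in particular `d ≤ d`). -/
def EdgeLe {V E : Type*} (tl hd : E → V) (d e : E) : Prop :=
  ∃ p : List E, EChain tl hd p ∧ p.head? = some d ∧ p.getLast? = some e

/-- A family of pairwise edge-disjoint paths. -/
def EdgeDisjoint {E : Type*} {n : ℕ} (P : Fin n → List E) : Prop :=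
  ∀ i j, i ≠ j → List.Disjoint (P i) (P j)

/-- The primary minimum cut between nodes `s` and `t`: a minimum cut separating
every minimum cut between `s` and `t` from `s`. -/
def IsPrimaryNodeMinCut {V E : Type*} [Fintype E] (tl hd : E → V) (s t : V)
    (C : Finset E) : Prop :=
  IsNodeMinCut tl hd s t C ∧
    ∀ C' : Finset E, IsNodeMinCut tl hd s t C' → Separates tl hd s C' C

/-- The primary minimum cut between `s` and an edge set `A`. -/
def IsPrimaryMinCut {V E : Type*} [Fintype E] (tl hd : E → V) (s : V)
    (A C : Finset E) : Prop :=
  IsMinCut tl hd s A C ∧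
    ∀ C' : Finset E, IsMinCut tl hd s A C' → Separates tl hd s C' C

/-- The equivalence class (within the collection `𝒜`) of the wiretap set `A`
under the relation `∼`. -/
def ClassOf {V E : Type*} [Fintype E] (tl hd : E → V) (s : V)
    (𝒜 : Finset (Finset E)) (A : Finset E) : Set (Finset E) :=
  {A' | A' ∈ 𝒜 ∧ EquivSets tl hd s A A'}

/-- Domination amongst (distinct) equivalence classes: some common minimum cut of all
the sets in `C₂` separates every set in `C₁` from `s`. -/
def ClDominates {V E : Type*} [Fintype E] (tl hd : E → V) (s : V)
    (C₁ C₂ : Set (Finset E)) : Prop :=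
  C₁ ≠ C₂ ∧ ∃ CUT : Finset E,
    (∀ A ∈ C₂, IsMinCut tl hd s A CUT) ∧ (∀ A ∈ C₁, Separates tl hd s A CUT)

section Aux

variable {V E : Type*}

/-- Edges reachable from `s` by a path avoiding the edge set `X`. -/
def Zset (tl hd : E → V) (s : V) (X : Finset E) : Set E :=
  {e | ∃ p : List E, PathFrom tl hd s p ∧ p.getLast? = some e ∧ ∀ x ∈ X, x ∉ p}

open Classical in
/-- The frontier of a set of edges `Z`: edges not in `Z` whose tail is `s` or is the
head of some edge of `Z`. -/
noncomputable def Nbd [Fintype E] (tl hd : E → V) (s : V) (Z : Set E) : Finset E :=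
  Finset.univ.filter (fun e => e ∉ Z ∧ (tl e = s ∨ ∃ d ∈ Z, hd d = tl e))

lemma mem_Nbd [Fintype E] {tl hd : E → V} {s : V} {Z : Set E} {e : E} :
    e ∈ Nbd tl hd s Z ↔ e ∉ Z ∧ (tl e = s ∨ ∃ d ∈ Z, hd d = tl e) := by
  classical
  simp [Nbd]

lemma Nbd_aux [Fintype E] (tl hd : E → V) (s : V) (Z : Set E) :
    ∀ p : List E, EChain tl hd p →
      (∀ e ∈ p.head?, tl e = s ∨ ∃ d ∈ Z, hd d = tl e) →
      (∀ e ∈ p, e ∈ Z) ∨ ∃ b ∈ Nbd tl hd s Z, b ∈ p := by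
  intro p
  induction p with
  | nil => intro _ _; exact Or.inl (by simp)
  | cons e rest ih =>
    intro hch hhd
    have he : tl e = s ∨ ∃ d ∈ Z, hd d = tl e := hhd e rfl
    by_cases heZ : e ∈ Z
    · have hch' : EChain tl hd rest := (List.isChain_cons.1 hch).2
      have hhd' : ∀ f ∈ rest.head?, tl f = s ∨ ∃ d ∈ Z, hd d = tl f := by
        intro f hf
        exact Or.inr ⟨e, heZ, (List.isChain_cons.1 hch).1 f hf⟩
      rcases ih hch' hhd' with h | ⟨b, hb1, hb2⟩
      · left
        intro x hx
        rcases List.mem_cons.1 hx with rfl | hx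
        · exact heZ
        · exact h x hx
      · exact Or.inr ⟨b, hb1, List.mem_cons_of_mem _ hb2⟩
    · exact Or.inr ⟨e, mem_Nbd.2 ⟨heZ, he⟩, List.mem_cons_self⟩

lemma Nbd_separates [Fintype E] (tl hd : E → V) (s : V) (Z : Set E) (A : Finset E)
    (hA : ∀ a ∈ A, a ∉ Z) : Separates tl hd s A (Nbd tl hd s Z) := by
  intro p hp ⟨a, ha1, ha2⟩
  have hhd : ∀ e ∈ p.head?, tl e = s ∨ ∃ d ∈ Z, hd d = tl e := by
    intro e he; exact Or.inl (hp.2.2 e he)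
  rcases Nbd_aux tl hd s Z p hp.2.1 hhd with h | ⟨b, hb1, hb2⟩
  · exact absurd (h a (List.mem_of_mem_getLast? ha1)) (hA a ha2)
  · exact ⟨b, hb1, hb2⟩

lemma Nbd_Zset_subset [Fintype E] (tl hd : E → V) (s : V) (X : Finset E) :
    Nbd tl hd s (Zset tl hd s X) ⊆ X := by
  intro e he
  rcases mem_Nbd.1 he with ⟨heZ, hcond⟩
  by_contra heX
  apply heZ
  rcases hcond with hs | ⟨d, hd', hde⟩
  · exact ⟨[e], ⟨by simp, List.isChain_singleton e, by simpa using hs⟩, by simp,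
      by simpa using heX⟩
  · rcases hd' with ⟨q, ⟨hq0, hq1, hq2⟩, hq3, hq4⟩
    refine ⟨q ++ [e], ⟨by simp, ?_, ?_⟩, ?_, ?_⟩
    · exact List.isChain_append.2 ⟨hq1, List.isChain_singleton e, by
        intro x hx y hy
        simp only [List.head?_cons, Option.mem_def, Option.some.injEq] at hy
        subst hy
        rw [hq3] at hx
        simp only [Option.mem_def, Option.some.injEq] at hx
        subst hx; exact hde⟩
    · intro f hf
      rw [List.head?_append_of_ne_nil _ hq0] at hf
      exact hq2 f hf
    · rw [List.getLast?_append_of_ne_nil _ (by simp)]; rfl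
    · intro x hx
      simp only [List.mem_append, List.mem_singleton]
      rintro (h | rfl)
      · exact hq4 x hx h
      · exact heX hx

lemma not_mem_Zset [Fintype E] {tl hd : E → V} {s : V} {X A : Finset E}
    (hX : Separates tl hd s A X) : ∀ a ∈ A, a ∉ Zset tl hd s X := by
  rintro a ha ⟨p, hp, hlast, havoid⟩
  rcases hX p hp ⟨a, hlast, ha⟩ with ⟨b, hb1, hb2⟩
  exact havoid b hb1 hb2

lemma Nbd_submod [Fintype E] (tl hd : E → V) (s : V) (Z W : Set E) :
    (Nbd tl hd s (Z ∩ W)).card + (Nbd tl hd s (Z ∪ W)).card ≤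
      (Nbd tl hd s Z).card + (Nbd tl hd s W).card := by
  classical
  set a := Nbd tl hd s (Z ∩ W)
  set b := Nbd tl hd s (Z ∪ W)
  set c := Nbd tl hd s Z
  set d := Nbd tl hd s W
  have h1 : a ∪ b ⊆ c ∪ d := by
    intro e he
    rcases Finset.mem_union.1 he with he | he
    · rcases mem_Nbd.1 he with ⟨heZ, hcond⟩
      have hPZ : tl e = s ∨ ∃ f ∈ Z, hd f = tl e := by
        rcases hcond with h | ⟨f, hf, hfe⟩
        · exact Or.inl h
        · exact Or.inr ⟨f, hf.1, hfe⟩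
      have hPW : tl e = s ∨ ∃ f ∈ W, hd f = tl e := by
        rcases hcond with h | ⟨f, hf, hfe⟩
        · exact Or.inl h
        · exact Or.inr ⟨f, hf.2, hfe⟩
      by_cases heZ' : e ∈ Z
      · have heW' : e ∉ W := fun h => heZ ⟨heZ', h⟩
        exact Finset.mem_union.2 (Or.inr (mem_Nbd.2 ⟨heW', hPW⟩))
      · exact Finset.mem_union.2 (Or.inl (mem_Nbd.2 ⟨heZ', hPZ⟩))
    · rcases mem_Nbd.1 he with ⟨heZ, hcond⟩
      have heZ' : e ∉ Z := fun h => heZ (Or.inl h)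
      have heW' : e ∉ W := fun h => heZ (Or.inr h)
      rcases hcond with h | ⟨f, hf | hf, hfe⟩
      · exact Finset.mem_union.2 (Or.inl (mem_Nbd.2 ⟨heZ', Or.inl h⟩))
      · exact Finset.mem_union.2 (Or.inl (mem_Nbd.2 ⟨heZ', Or.inr ⟨f, hf, hfe⟩⟩))
      · exact Finset.mem_union.2 (Or.inr (mem_Nbd.2 ⟨heW', Or.inr ⟨f, hf, hfe⟩⟩))
  have h2 : a ∩ b ⊆ c ∩ d := by
    intro e he
    rcases Finset.mem_inter.1 he with ⟨hea, heb⟩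
    rcases mem_Nbd.1 hea with ⟨_, hconda⟩
    rcases mem_Nbd.1 heb with ⟨heZW, _⟩
    have heZ' : e ∉ Z := fun h => heZW (Or.inl h)
    have heW' : e ∉ W := fun h => heZW (Or.inr h)
    have hPZ : tl e = s ∨ ∃ f ∈ Z, hd f = tl e := by
      rcases hconda with h | ⟨f, hf, hfe⟩
      · exact Or.inl h
      · exact Or.inr ⟨f, hf.1, hfe⟩
    have hPW : tl e = s ∨ ∃ f ∈ W, hd f = tl e := by
      rcases hconda with h | ⟨f, hf, hfe⟩
      · exact Or.inl h
      · exact Or.inr ⟨f, hf.2, hfe⟩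
    exact Finset.mem_inter.2 ⟨mem_Nbd.2 ⟨heZ', hPZ⟩, mem_Nbd.2 ⟨heW', hPW⟩⟩
  calc a.card + b.card = (a ∪ b).card + (a ∩ b).card :=
        (Finset.card_union_add_card_inter a b).symm
    _ ≤ (c ∪ d).card + (c ∩ d).card :=
        Nat.add_le_add (Finset.card_le_card h1) (Finset.card_le_card h2)
    _ = c.card + d.card := Finset.card_union_add_card_inter c d

lemma mincut_le [Fintype E] {tl hd : E → V} {s : V} {A B : Finset E}
    (h : Separates tl hd s A B) : mincut tl hd s A ≤ B.card :=
  Nat.sInf_le ⟨B, h, rfl⟩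

lemma exists_minCut [Fintype E] (tl hd : E → V) (s : V) (A : Finset E) :
    ∃ B : Finset E, IsMinCut tl hd s A B := by
  have hne : {n | ∃ B : Finset E, Separates tl hd s A B ∧ B.card = n}.Nonempty := by
    refine ⟨(Finset.univ : Finset E).card, Finset.univ, ?_, rfl⟩
    intro p hp ⟨a, ha1, _⟩
    exact ⟨a, Finset.mem_univ a, List.mem_of_mem_getLast? ha1⟩
  rcases Nat.sInf_mem hne with ⟨B, hB1, hB2⟩
  exact ⟨B, hB1, hB2⟩

end Aux

/-- `∼` is an equivalence relation on regular edge sets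
(reflexive, symmetric, and transitive). -/
theorem equivSets_equivalence {V E : Type*} [Fintype E] (tl hd : E → V) (s : V)
    (hacy : Acyclic tl hd) (hsrc : ∀ e : E, hd e ≠ s) :
    (∀ A : Finset E, Regular tl hd s A → EquivSets tl hd s A A) ∧
    (∀ A A' : Finset E, Regular tl hd s A → Regular tl hd s A' →
      EquivSets tl hd s A A' → EquivSets tl hd s A' A) ∧
    (∀ A B C : Finset E, Regular tl hd s A → Regular tl hd s B → Regular tl hd s C →
      EquivSets tl hd s A B → EquivSets tl hd s B C → EquivSets tl hd s A C) := by
  refine ⟨?_, ?_, ?_⟩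
  · intro A _
    rcases exists_minCut tl hd s A with ⟨B, hB⟩
    exact ⟨B, hB, hB⟩
  · rintro A A' _ _ ⟨C, h1, h2⟩
    exact ⟨C, h2, h1⟩
  · rintro A B C _ _ _ ⟨D, hDA, hDB⟩ ⟨F, hFB, hFC⟩
    set ZD := Zset tl hd s D
    set ZF := Zset tl hd s F
    set G := Nbd tl hd s (ZD ∩ ZF) with hGdef
    set H := Nbd tl hd s (ZD ∪ ZF) with hHdef
    have hGsepA : Separates tl hd s A G :=
      Nbd_separates tl hd s _ A (fun a ha hz => not_mem_Zset hDA.1 a ha hz.1)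
    have hGsepC : Separates tl hd s C G :=
      Nbd_separates tl hd s _ C (fun a ha hz => not_mem_Zset hFC.1 a ha hz.2)
    have hHsepB : Separates tl hd s B H :=
      Nbd_separates tl hd s _ B (fun a ha hz => hz.elim
        (not_mem_Zset hDB.1 a ha) (not_mem_Zset hFB.1 a ha))
    have hsub : G.card + H.card ≤ D.card + F.card := by
      refine (Nbd_submod tl hd s ZD ZF).trans (Nat.add_le_add ?_ ?_)
      · exact Finset.card_le_card (Nbd_Zset_subset tl hd s D)
      · exact Finset.card_le_card (Nbd_Zset_subset tl hd s F)
    have h1 : mincut tl hd s A ≤ G.card := mincut_le hGsepA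
    have h2 : mincut tl hd s B ≤ H.card := mincut_le hHsepB
    have hDcard := hDA.2
    have hDcard' := hDB.2
    have hFcard := hFB.2
    have hFcard' := hFC.2
    have hGcard : G.card = mincut tl hd s A := by omega
    have hGcard' : G.card = mincut tl hd s C := by omega
    exact ⟨G, ⟨hGsepA, hGcard⟩, ⟨hGsepC, hGcard'⟩⟩
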